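/- Let α, β, γ, c ∈ ℝ with 4αγ − β² > 0, and define z(λ) = (2/√(4αγ−β²))·arctan((β + 2γλ)/√(4αγ−β²)) + c and Γ(λ) = 1 − (α + βλ + γλ²)/λ². Then for every λ ≠ 0, z is differentiable at λ and z′(λ) = −1/(λ²·(Γ(λ) − 1)). -/

import Mathlib

/-- For `Γ(λ) = 1 − (α + βλ + γλ²)/λ²` with `4αγ − β² > 0`, the function
`z(λ) = (2/√(4αγ−β²))·arctan((β + 2γλ)/√(4αγ−β²)) + c` solves
`z′(λ) = −1/(λ²(Γ(λ) − 1))` for every `λ ≠ 0`. -/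
theorem z_solves_ODE_arctan (α β γ c : ℝ) (h : 0 < 4*α*γ - β^2) :
    let s : ℝ := Real.sqrt (4*α*γ - β^2)
    let z : ℝ → ℝ := fun l => 2/s * Real.arctan ((β + 2*γ*l)/s) + c
    let Γ : ℝ → ℝ := fun l => 1 - (α + β*l + γ*l^2)/l^2
    ∀ l : ℝ, l ≠ 0 →
      DifferentiableAt ℝ z l ∧ deriv z l = -1/(l^2*(Γ l - 1)) := by
  intro s z Γ l hl
  have hs2 : s^2 = 4*α*γ - β^2 := Real.sq_sqrt h.le
  have hspos : 0 < s := Real.sqrt_pos.mpr h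
  have hsne : s ≠ 0 := ne_of_gt hspos
  have hγ : γ ≠ 0 := by
    intro hg
    rw [hg] at h; nlinarith [sq_nonneg β]
  have hquad : α + β*l + γ*l^2 ≠ 0 := by
    intro hq
    have key : (β + 2*γ*l)^2 = β^2 - 4*α*γ + 4*γ*(α + β*l + γ*l^2) := by ring
    rw [hq] at key
    nlinarith [sq_nonneg (β + 2*γ*l)]
  have hu : HasDerivAt (fun x : ℝ => (β + 2*γ*x)/s) (2*γ/s) l := by
    have : HasDerivAt (fun x : ℝ => β + 2*γ*x) (2*γ) l := by
      simpa using ((hasDerivAt_id l).const_mul (2*γ)).const_add β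
    simpa using this.div_const s
  have harctan : HasDerivAt (fun x : ℝ => Real.arctan ((β + 2*γ*x)/s))
      ((1 + ((β + 2*γ*l)/s)^2)⁻¹ * (2*γ/s)) l := by
    have := (Real.hasDerivAt_arctan ((β + 2*γ*l)/s)).comp l hu
    simpa [Function.comp_def, one_div] using this
  have hz : HasDerivAt z (2/s * ((1 + ((β + 2*γ*l)/s)^2)⁻¹ * (2*γ/s))) l := by
    exact (harctan.const_mul (2/s)).add_const c
  refine ⟨hz.differentiableAt, ?_⟩
  rw [hz.deriv]
  show 2/s * ((1 + ((β + 2*γ*l)/s)^2)⁻¹ * (2*γ/s))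
      = -1/(l^2*((1 - (α + β*l + γ*l^2)/l^2) - 1))
  have h1 : 1 + ((β + 2*γ*l)/s)^2 ≠ 0 := by positivity
  have hden : l^2*((1 - (α + β*l + γ*l^2)/l^2) - 1) = -(α + β*l + γ*l^2) := by
    field_simp
    ring
  rw [hden]
  rw [div_neg, neg_div, neg_neg, eq_div_iff hquad]
  field_simp
  linear_combination (-1) * hs2
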